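/- Let n ≥ 1 and let k, k' ∈ P^{+}, i.e., k = (k_1,…,k_n) and k' = (k'_1,…,k'_n) are integer vectors with k_1 ≥ k_2 ≥ … ≥ k_n ≥ 0 and k'_1 ≥ k'_2 ≥ … ≥ k'_n ≥ 0. Then ∫_{F(S̃_n^aff)} cos⁺_k(x) cos⁺_{k'}(x) dx = h_k · H_k · δ_{k,k'}, where dx is n-dimensional Lebesgue measure. -/

import Mathlib

open Real Finset MeasureTheory

/-- The symmetric multivariate cosine function
`cos⁺_λ(x) = Σ_{σ ∈ S_n} ∏_{i=1}^n cos(π λ_{σ(i)} x_i)`. -/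
noncomputable def cosPlus (n : ℕ) (lam x : Fin n → ℝ) : ℝ :=
  ∑ σ : Equiv.Perm (Fin n), ∏ i : Fin n, Real.cos (Real.pi * lam (σ i) * x i)

/-- The fundamental domain `F(S̃_n^aff) = {x ∈ ℝ^n : 1 ≥ x_1 ≥ x_2 ≥ … ≥ x_n ≥ 0}`. -/
def Fdom (n : ℕ) : Set (Fin n → ℝ) :=
  {x | (∀ i j : Fin n, i ≤ j → x j ≤ x i) ∧ ∀ i : Fin n, 0 ≤ x i ∧ x i ≤ 1}

/-- `H_k`, the order of the stabilizer of `k` under the permutation action of `S_n`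
(where `σ(k)_i = k_{σ(i)}`, i.e. `σ(k) = k ∘ σ`). -/
def Hstab {n : ℕ} {α : Type*} [DecidableEq α] (k : Fin n → α) : ℕ :=
  (Finset.univ.filter fun σ : Equiv.Perm (Fin n) => k ∘ σ = k).card

/-! ### Auxiliary lemmas -/

section OneDim

lemma CO.intCos (m : ℤ) : ∫ x in (0:ℝ)..1, Real.cos (π * m * x) = if m = 0 then 1 else 0 := by
  rcases eq_or_ne m 0 with h | h
  · simp [h]
  · have hc : (π * m : ℝ) ≠ 0 := by
      apply mul_ne_zero Real.pi_ne_zero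
      exact_mod_cast h
    rw [if_neg h]
    have := intervalIntegral.integral_comp_mul_left (a := (0:ℝ)) (b := 1)
      (f := Real.cos) hc
    simp only [mul_zero, mul_one] at this
    rw [this, integral_cos]
    simp [mul_comm π (m:ℝ), Real.sin_int_mul_pi, smul_eq_mul]

lemma CO.cosOrth (a b : ℕ) : ∫ x in (0:ℝ)..1, Real.cos (π*a*x) * Real.cos (π*b*x)
    = if a = b then (if a = 0 then (1:ℝ) else 1/2) else 0 := by
  have key : ∀ x : ℝ, Real.cos (π*a*x) * Real.cos (π*b*x)
      = (Real.cos (π * ((a - b : ℤ)) * x) + Real.cos (π * ((a + b : ℤ)) * x)) / 2 := by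
    intro x
    push_cast
    rw [show π * ((a:ℝ) - b) * x = π*a*x - π*b*x by ring,
      show π * ((a:ℝ) + b) * x = π*a*x + π*b*x by ring,
      Real.cos_sub, Real.cos_add]
    ring
  simp only [key]
  rw [intervalIntegral.integral_div, intervalIntegral.integral_add]
  · rw [CO.intCos, CO.intCos]
    rcases eq_or_ne a b with h | h
    · subst h
      rcases eq_or_ne a 0 with h0 | h0 <;> simp [h0]
    · have h1 : (a:ℤ) - b ≠ 0 := by omega
      rcases eq_or_ne ((a:ℤ) + b) 0 with h3 | h3
      · exfalso; omega
      · simp [h1, h3, h]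
  · exact (Real.continuous_cos.comp (continuous_const.mul continuous_id)).intervalIntegrable _ _
  · exact (Real.continuous_cos.comp (continuous_const.mul continuous_id)).intervalIntegrable _ _

lemma CO.cosOrth' (a b : ℕ) : ∫ t in Set.Icc (0:ℝ) 1, Real.cos (π*a*t) * Real.cos (π*b*t)
    = if a = b then (if a = 0 then (1:ℝ) else 1/2) else 0 := by
  rw [MeasureTheory.integral_Icc_eq_integral_Ioc,
    ← intervalIntegral.integral_of_le (zero_le_one)]
  exact CO.cosOrth a b

end OneDim

section Counting

lemma CO.rev_strictAnti (n : ℕ) : StrictAnti (Fin.rev : Fin n → Fin n) :=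
  fun _ _ h => Fin.rev_lt_rev.mpr h

lemma CO.antitone_perm_eq {n : ℕ} {k k' : Fin n → ℕ}
    (hk : ∀ i j : Fin n, i ≤ j → k j ≤ k i) (hk' : ∀ i j : Fin n, i ≤ j → k' j ≤ k' i)
    (ρ : Equiv.Perm (Fin n)) (h : k ∘ ρ = k') : k = k' := by
  have h1 : Monotone (k ∘ (Fin.revPerm : Equiv.Perm (Fin n))) := by
    intro i j hij
    exact hk _ _ ((CO.rev_strictAnti n).antitone hij)
  have h2 : Monotone (k ∘ (ρ * Fin.revPerm : Equiv.Perm (Fin n))) := by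
    intro i j hij
    have : k' (Fin.rev i) ≤ k' (Fin.rev j) := hk' _ _ ((CO.rev_strictAnti n).antitone hij)
    simpa [← h, Function.comp, Equiv.Perm.mul_apply] using this
  have heq := Tuple.unique_monotone h2 h1
  funext i
  have h3 := congrFun heq (Fin.rev i)
  simp only [Function.comp, Equiv.Perm.mul_apply, Fin.revPerm_apply, Fin.rev_rev] at h3
  rw [← h]; exact h3.symm

lemma CO.count_pairs {n : ℕ} (k : Fin n → ℕ) :
    ((Finset.univ : Finset (Equiv.Perm (Fin n) × Equiv.Perm (Fin n))).filter
      fun p => k ∘ p.1 = k ∘ p.2).card = Nat.factorial n * Hstab k := by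
  classical
  rw [show Nat.factorial n * Hstab k = ((Finset.univ : Finset (Equiv.Perm (Fin n))) ×ˢ
      (Finset.univ.filter fun ρ : Equiv.Perm (Fin n) => k ∘ ρ = k)).card by
    rw [Finset.card_product, Finset.card_univ, Fintype.card_perm, Fintype.card_fin, Hstab]]
  apply Finset.card_nbij' (i := fun p => (p.2, p.1 * p.2⁻¹)) (j := fun q => (q.2 * q.1, q.1))
  · intro p hp
    simp only [Finset.mem_coe, Finset.mem_filter, Finset.mem_univ, true_and] at hp
    simp only [Finset.mem_coe, Finset.mem_product, Finset.mem_univ, Finset.mem_filter, true_and]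
    funext i
    simpa using congrFun hp (p.2⁻¹ i)
  · intro q hq
    simp only [Finset.mem_coe, Finset.mem_product, Finset.mem_univ, Finset.mem_filter, true_and] at hq
    simp only [Finset.mem_coe, Finset.mem_filter, Finset.mem_univ, true_and]
    funext i
    simpa using congrFun hq (q.1 i)
  · intro p _; simp [mul_assoc]
  · intro q _; simp [mul_assoc]

end Counting

section MeasureAux

lemma CO.hyperplane_null {n : ℕ} {i j : Fin n} (hij : i ≠ j) :
    volume {x : Fin n → ℝ | x i = x j} = 0 := by
  have heq : {x : Fin n → ℝ | x i = x j} =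
      (LinearMap.ker ((LinearMap.proj i : (Fin n → ℝ) →ₗ[ℝ] ℝ) - LinearMap.proj j) : Set _) := by
    ext x
    simp [LinearMap.mem_ker, sub_eq_zero]
  rw [heq]
  refine Measure.addHaar_submodule _ _ ?_
  intro htop
  have hmem : (Pi.single i 1 : Fin n → ℝ) ∈
      LinearMap.ker ((LinearMap.proj i : (Fin n → ℝ) →ₗ[ℝ] ℝ) - LinearMap.proj j) := by
    rw [htop]; trivial
  simp only [LinearMap.mem_ker, LinearMap.sub_apply, LinearMap.proj_apply] at hmem
  rw [Pi.single_eq_same, Pi.single_eq_of_ne (Ne.symm hij)] at hmem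
  norm_num at hmem

/-- The null set of points with two equal coordinates. -/
def CO.Nset (n : ℕ) : Set (Fin n → ℝ) :=
  ⋃ (i : Fin n), ⋃ (j : Fin n), ⋃ (_ : i ≠ j), {x | x i = x j}

lemma CO.Nset_null (n : ℕ) : volume (CO.Nset n) = 0 := by
  refine measure_iUnion_null fun i => measure_iUnion_null fun j => measure_iUnion_null fun h => ?_
  exact CO.hyperplane_null h

/-- The unit cube. -/
def CO.cube (n : ℕ) : Set (Fin n → ℝ) := Set.univ.pi fun _ => Set.Icc (0:ℝ) 1

/-- The part of the cube whose coordinates are strictly decreasing after permuting by `σ`. -/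
def CO.Aset (n : ℕ) (σ : Equiv.Perm (Fin n)) : Set (Fin n → ℝ) :=
  {x | x ∈ CO.cube n ∧ StrictAnti (x ∘ σ)}

lemma CO.Aset_measurable (n : ℕ) (σ : Equiv.Perm (Fin n)) : MeasurableSet (CO.Aset n σ) := by
  have : CO.Aset n σ = CO.cube n ∩ ⋂ (a : Fin n), ⋂ (b : Fin n), ⋂ (_ : a < b),
      {x : Fin n → ℝ | x (σ b) < x (σ a)} := by
    ext x
    simp only [CO.Aset, CO.cube, Set.mem_setOf_eq, Set.mem_inter_iff, Set.mem_iInter, StrictAnti,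
      Function.comp]
  rw [this]
  refine (MeasurableSet.univ_pi fun _ => measurableSet_Icc).inter ?_
  exact MeasurableSet.iInter fun a => MeasurableSet.iInter fun b => MeasurableSet.iInter fun _ =>
    measurableSet_lt (measurable_pi_apply _) (measurable_pi_apply _)

lemma CO.Aset_disjoint (n : ℕ) {σ τ : Equiv.Perm (Fin n)} (hst : σ ≠ τ) :
    Disjoint (CO.Aset n σ) (CO.Aset n τ) := by
  rw [Set.disjoint_left]
  rintro x ⟨-, hσ⟩ ⟨-, hτ⟩
  apply hst
  have h1 : Monotone (x ∘ ⇑(σ * Fin.revPerm : Equiv.Perm (Fin n))) := by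
    have h : (x ∘ ⇑(σ * Fin.revPerm : Equiv.Perm (Fin n))) = (x ∘ σ) ∘ Fin.rev := rfl
    rw [h]
    exact (hσ.comp (CO.rev_strictAnti n)).monotone
  have h2 : Monotone (x ∘ ⇑(τ * Fin.revPerm : Equiv.Perm (Fin n))) := by
    have h : (x ∘ ⇑(τ * Fin.revPerm : Equiv.Perm (Fin n))) = (x ∘ τ) ∘ Fin.rev := rfl
    rw [h]
    exact (hτ.comp (CO.rev_strictAnti n)).monotone
  have heq := Tuple.unique_monotone h1 h2
  have hxinj : Function.Injective x := by
    have hinj := hσ.injective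
    have hx : x = (x ∘ σ) ∘ ⇑σ.symm := by funext i; simp
    rw [hx]
    exact hinj.comp σ.symm.injective
  have hpt : ∀ j, x (σ j) = x (τ j) := by
    intro j
    have := congrFun heq (Fin.rev j)
    simpa [Equiv.Perm.mul_apply] using this
  exact Equiv.ext fun j => hxinj (hpt j)

lemma CO.Aset_cover (n : ℕ) :
    CO.cube n \ (⋃ σ : Equiv.Perm (Fin n), CO.Aset n σ) ⊆ CO.Nset n := by
  rintro x ⟨hxc, hxn⟩
  by_contra hN
  apply hxn
  have hxinj : Function.Injective x := by
    intro a b hab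
    by_contra hne
    exact hN (Set.mem_iUnion.2 ⟨a, Set.mem_iUnion.2 ⟨b, Set.mem_iUnion.2 ⟨hne, hab⟩⟩⟩)
  refine Set.mem_iUnion.2 ⟨Tuple.sort x * Fin.revPerm, hxc, ?_⟩
  have hmono : StrictMono (x ∘ Tuple.sort x) :=
    (Tuple.monotone_sort x).strictMono_of_injective (hxinj.comp (Tuple.sort x).injective)
  have h : (x ∘ ⇑(Tuple.sort x * Fin.revPerm : Equiv.Perm (Fin n)))
      = (x ∘ Tuple.sort x) ∘ Fin.rev := rfl
  rw [h]
  exact hmono.comp_strictAnti (CO.rev_strictAnti n)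

lemma CO.piCongr_coe (n : ℕ) (σ : Equiv.Perm (Fin n)) (x : Fin n → ℝ) :
    (MeasurableEquiv.piCongrLeft (fun _ : Fin n => ℝ) σ.symm) x = x ∘ σ := by
  funext j
  have h := Equiv.piCongrLeft_apply_apply (P := fun _ : Fin n => ℝ) σ.symm x (σ j)
  simpa [MeasurableEquiv.coe_piCongrLeft] using h

lemma CO.sym_reduce (n : ℕ) (f : (Fin n → ℝ) → ℝ) (hf : Continuous f)
    (hsym : ∀ (σ : Equiv.Perm (Fin n)) (x : Fin n → ℝ), f (x ∘ σ) = f x) :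
    ∫ x in CO.cube n, f x = (Nat.factorial n : ℝ) * ∫ x in Fdom n, f x := by
  have hcubeM : MeasurableSet (CO.cube n) := MeasurableSet.univ_pi fun _ => measurableSet_Icc
  have hcubeC : IsCompact (CO.cube n) := isCompact_univ_pi fun _ => isCompact_Icc
  have hint : IntegrableOn f (CO.cube n) := hf.continuousOn.integrableOn_compact hcubeC
  have hAsub : ∀ σ, CO.Aset n σ ⊆ CO.cube n := fun σ x hx => hx.1
  have hA1 : ∀ σ : Equiv.Perm (Fin n),
      ∫ x in CO.Aset n σ, f x = ∫ x in CO.Aset n 1, f x := by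
    intro σ
    have hmp := volume_measurePreserving_piCongrLeft (fun _ : Fin n => ℝ) σ.symm
    have hemb := (MeasurableEquiv.piCongrLeft (fun _ : Fin n => ℝ) σ.symm).measurableEmbedding
    have hpre : (MeasurableEquiv.piCongrLeft (fun _ : Fin n => ℝ) σ.symm) ⁻¹' (CO.Aset n 1)
        = CO.Aset n σ := by
      ext x
      simp only [Set.mem_preimage, CO.piCongr_coe, CO.Aset, Set.mem_setOf_eq]
      constructor
      · rintro ⟨hc, hs⟩
        refine ⟨fun i _ => ?_, by simpa using hs⟩
        have := hc (σ.symm i) (Set.mem_univ _)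
        simpa using this
      · rintro ⟨hc, hs⟩
        refine ⟨fun i _ => hc (σ i) (Set.mem_univ _), by simpa using hs⟩
    have key := hmp.setIntegral_preimage_emb hemb f (CO.Aset n 1)
    rw [hpre] at key
    rw [← key]
    refine setIntegral_congr_fun (CO.Aset_measurable n σ) fun x _ => ?_
    rw [CO.piCongr_coe, hsym]
  have haeq : CO.cube n =ᵐ[volume] ⋃ σ : Equiv.Perm (Fin n), CO.Aset n σ := by
    rw [MeasureTheory.ae_eq_set]
    constructor
    · exact measure_mono_null (CO.Aset_cover n) (CO.Nset_null n)
    · have : (⋃ σ : Equiv.Perm (Fin n), CO.Aset n σ) \ CO.cube n = ∅ := by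
        rw [Set.diff_eq_empty]
        exact Set.iUnion_subset hAsub
      rw [this]; simp
  calc ∫ x in CO.cube n, f x = ∫ x in ⋃ σ : Equiv.Perm (Fin n), CO.Aset n σ, f x :=
        setIntegral_congr_set haeq
    _ = ∫ x in ⋃ σ ∈ (Finset.univ : Finset (Equiv.Perm (Fin n))), CO.Aset n σ, f x := by
        simp
    _ = ∑ σ : Equiv.Perm (Fin n), ∫ x in CO.Aset n σ, f x := by
        refine integral_biUnion_finset Finset.univ (fun σ _ => CO.Aset_measurable n σ)
          ?_ (fun σ _ => hint.mono_set (hAsub σ))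
        intro σ _ τ _ hst
        exact CO.Aset_disjoint n hst
    _ = (Nat.factorial n : ℝ) * ∫ x in CO.Aset n 1, f x := by
        rw [Finset.sum_congr rfl fun σ _ => hA1 σ, Finset.sum_const, Finset.card_univ,
          Fintype.card_perm, Fintype.card_fin, nsmul_eq_mul]
    _ = (Nat.factorial n : ℝ) * ∫ x in Fdom n, f x := by
        congr 1
        refine setIntegral_congr_set ?_
        rw [MeasureTheory.ae_eq_set]
        constructor
        · have : CO.Aset n 1 \ Fdom n = ∅ := by
            rw [Set.diff_eq_empty]
            rintro x ⟨hc, hs⟩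
            have hs' : StrictAnti x := by simpa using hs
            refine ⟨fun i j hij => hs'.antitone hij, fun i => ?_⟩
            have := hc i (Set.mem_univ _)
            simpa [CO.cube] using this
          rw [this]; simp
        · refine measure_mono_null ?_ (CO.Nset_null n)
          rintro x ⟨hF, hA⟩
          simp only [CO.Aset, Set.mem_setOf_eq, not_and] at hA
          have hxc : x ∈ CO.cube n := by
            intro i _
            exact ⟨(hF.2 i).1, (hF.2 i).2⟩
          have hns : ¬ StrictAnti (x ∘ ⇑(1 : Equiv.Perm (Fin n))) := hA hxc
          have hns' : ¬ StrictAnti x := by simpa using hns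
          simp only [StrictAnti, not_forall] at hns'
          obtain ⟨a, b, hab, hle⟩ := hns'
          push_neg at hle
          have hba : x b ≤ x a := hF.1 a b hab.le
          have : x a = x b := le_antisymm hle hba
          exact Set.mem_iUnion.2 ⟨a, Set.mem_iUnion.2 ⟨b, Set.mem_iUnion.2 ⟨hab.ne, this⟩⟩⟩

lemma CO.prod_integral {n : ℕ} (g : Fin n → ℝ → ℝ) :
    ∫ x in CO.cube n, ∏ i, g i (x i) = ∏ i, ∫ t in Set.Icc (0:ℝ) 1, g i t := by
  have hcubeM : MeasurableSet (CO.cube n) := MeasurableSet.univ_pi fun _ => measurableSet_Icc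
  rw [← integral_indicator hcubeM]
  have hpt : (CO.cube n).indicator (fun x => ∏ i, g i (x i))
      = fun x => ∏ i, (Set.Icc (0:ℝ) 1).indicator (g i) (x i) := by
    funext x
    by_cases hx : x ∈ CO.cube n
    · rw [Set.indicator_of_mem hx]
      exact Finset.prod_congr rfl fun i _ =>
        (Set.indicator_of_mem (hx i (Set.mem_univ i)) _).symm
    · rw [Set.indicator_of_notMem hx]
      simp only [CO.cube, Set.mem_pi, Set.mem_univ, forall_true_left, not_forall] at hx
      obtain ⟨i, hi⟩ := hx
      symm
      refine Finset.prod_eq_zero (Finset.mem_univ i) ?_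
      rw [Set.indicator_of_notMem]
      simpa using hi
  rw [hpt, MeasureTheory.integral_fintype_prod_volume_eq_prod
    (f := fun i => (Set.Icc (0:ℝ) 1).indicator (g i))]
  exact Finset.prod_congr rfl fun i _ => integral_indicator measurableSet_Icc

lemma CO.cube_integral {n : ℕ} (k k' : Fin n → ℕ) :
    ∫ x in CO.cube n, cosPlus n (fun i => (k i : ℝ)) x * cosPlus n (fun i => (k' i : ℝ)) x
      = ∑ σ : Equiv.Perm (Fin n), ∑ τ : Equiv.Perm (Fin n),
          (if k ∘ σ = k' ∘ τ then ∏ i : Fin n, (if k i = 0 then (1:ℝ) else 1/2) else 0) := by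
  have hcubeM : MeasurableSet (CO.cube n) := MeasurableSet.univ_pi fun _ => measurableSet_Icc
  have hcubeC : IsCompact (CO.cube n) := isCompact_univ_pi fun _ => isCompact_Icc
  have hexp : ∀ x : Fin n → ℝ,
      cosPlus n (fun i => (k i : ℝ)) x * cosPlus n (fun i => (k' i : ℝ)) x
      = ∑ σ : Equiv.Perm (Fin n), ∑ τ : Equiv.Perm (Fin n),
          ∏ i : Fin n, (Real.cos (π * k (σ i) * x i) * Real.cos (π * k' (τ i) * x i)) := by
    intro x
    rw [cosPlus, cosPlus, Finset.sum_mul_sum]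
    exact Finset.sum_congr rfl fun σ _ => Finset.sum_congr rfl fun τ _ =>
      (Finset.prod_mul_distrib).symm
  have hcont : ∀ (σ τ : Equiv.Perm (Fin n)), Continuous fun x : Fin n → ℝ =>
      ∏ i : Fin n, (Real.cos (π * k (σ i) * x i) * Real.cos (π * k' (τ i) * x i)) := by
    intro σ τ
    refine continuous_finset_prod _ fun i _ => Continuous.mul ?_ ?_ <;>
      exact Real.continuous_cos.comp (continuous_const.mul (continuous_apply i))
  calc ∫ x in CO.cube n,
        cosPlus n (fun i => (k i : ℝ)) x * cosPlus n (fun i => (k' i : ℝ)) x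
      = ∫ x in CO.cube n, ∑ σ : Equiv.Perm (Fin n), ∑ τ : Equiv.Perm (Fin n),
          ∏ i : Fin n, (Real.cos (π * k (σ i) * x i) * Real.cos (π * k' (τ i) * x i)) := by
        exact setIntegral_congr_fun hcubeM fun x _ => hexp x
    _ = ∑ σ : Equiv.Perm (Fin n), ∑ τ : Equiv.Perm (Fin n), ∫ x in CO.cube n,
          ∏ i : Fin n, (Real.cos (π * k (σ i) * x i) * Real.cos (π * k' (τ i) * x i)) := by
        rw [integral_finset_sum]
        · exact Finset.sum_congr rfl fun σ _ => integral_finset_sum _ fun τ _ =>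
            ((hcont σ τ).continuousOn.integrableOn_compact hcubeC)
        · intro σ _
          exact integrable_finset_sum _ fun τ _ =>
            ((hcont σ τ).continuousOn.integrableOn_compact hcubeC)
    _ = ∑ σ : Equiv.Perm (Fin n), ∑ τ : Equiv.Perm (Fin n),
          (if k ∘ σ = k' ∘ τ then ∏ i : Fin n, (if k i = 0 then (1:ℝ) else 1/2) else 0) := by
        refine Finset.sum_congr rfl fun σ _ => Finset.sum_congr rfl fun τ _ => ?_
        rw [CO.prod_integral
          (fun i t => Real.cos (π * k (σ i) * t) * Real.cos (π * k' (τ i) * t))]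
        have hv : ∀ i : Fin n, (∫ t in Set.Icc (0:ℝ) 1,
            Real.cos (π * k (σ i) * t) * Real.cos (π * k' (τ i) * t))
            = if k (σ i) = k' (τ i) then (if k (σ i) = 0 then (1:ℝ) else 1/2) else 0 :=
          fun i => CO.cosOrth' (k (σ i)) (k' (τ i))
        rw [Finset.prod_congr rfl fun i _ => hv i]
        by_cases h : k ∘ σ = k' ∘ τ
        · rw [if_pos h]
          have hpt : ∀ i, k (σ i) = k' (τ i) := fun i => congrFun h i
          calc (∏ i : Fin n,
                if k (σ i) = k' (τ i) then (if k (σ i) = 0 then (1:ℝ) else 1/2) else 0)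
              = ∏ i : Fin n, (if k (σ i) = 0 then (1:ℝ) else 1/2) :=
                Finset.prod_congr rfl fun i _ => by rw [if_pos (hpt i)]
            _ = ∏ i : Fin n, (if k i = 0 then (1:ℝ) else 1/2) :=
                Equiv.prod_comp σ fun j => if k j = 0 then (1:ℝ) else 1/2
        · rw [if_neg h]
          have hex : ∃ i, k (σ i) ≠ k' (τ i) := by
            by_contra hc
            push_neg at hc
            exact h (funext hc)
          obtain ⟨i, hi⟩ := hex
          exact Finset.prod_eq_zero (Finset.mem_univ i) (by rw [if_neg hi])

lemma CO.cosPlus_perm (n : ℕ) (lam x : Fin n → ℝ) (σ : Equiv.Perm (Fin n)) :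
    cosPlus n lam (x ∘ σ) = cosPlus n lam x := by
  rw [cosPlus, cosPlus]
  refine Fintype.sum_equiv (Equiv.mulRight σ⁻¹) _ _ fun ρ => ?_
  simp only [Equiv.coe_mulRight]
  rw [← Equiv.prod_comp σ (fun j => Real.cos (π * lam ((ρ * σ⁻¹) j) * x j))]
  refine Finset.prod_congr rfl fun i _ => ?_
  simp [Equiv.Perm.mul_apply]

end MeasureAux

theorem continuous_orthogonality_sym_integer (n : ℕ) (hn : 1 ≤ n)
    (k k' : Fin n → ℕ)
    (hk : ∀ i j : Fin n, i ≤ j → k j ≤ k i)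
    (hk' : ∀ i j : Fin n, i ≤ j → k' j ≤ k' i) :
    ∫ x in Fdom n,
        cosPlus n (fun i => (k i : ℝ)) x * cosPlus n (fun i => (k' i : ℝ)) x
      = (∏ i : Fin n, if k i = 0 then (1 : ℝ) else 1 / 2) * (Hstab k : ℝ) *
          (if k = k' then (1 : ℝ) else 0) := by
  classical
  set f : (Fin n → ℝ) → ℝ := fun x =>
    cosPlus n (fun i => (k i : ℝ)) x * cosPlus n (fun i => (k' i : ℝ)) x with hfdef
  have hf : Continuous f := by
    apply Continuous.mul <;>
    · apply continuous_finset_sum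
      intro σ _
      apply continuous_finset_prod
      intro i _
      exact Real.continuous_cos.comp (continuous_const.mul (continuous_apply i))
  have hsym : ∀ (σ : Equiv.Perm (Fin n)) (x : Fin n → ℝ), f (x ∘ σ) = f x := by
    intro σ x
    simp only [hfdef, CO.cosPlus_perm]
  have hred := CO.sym_reduce n f hf hsym
  have hcube := CO.cube_integral k k'
  have hfact : (Nat.factorial n : ℝ) ≠ 0 := Nat.cast_ne_zero.2 (Nat.factorial_ne_zero n)
  -- compute the double sum
  set C : ℝ := ∏ i : Fin n, (if k i = 0 then (1:ℝ) else 1/2) with hC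
  have hsum : (∑ σ : Equiv.Perm (Fin n), ∑ τ : Equiv.Perm (Fin n),
      (if k ∘ σ = k' ∘ τ then C else 0))
      = (Nat.factorial n : ℝ) * C * (Hstab k : ℝ) * (if k = k' then (1:ℝ) else 0) := by
    rcases eq_or_ne k k' with hkk | hkk
    · subst hkk
      rw [if_pos rfl, mul_one]
      rw [← Fintype.sum_prod_type (f := fun p : Equiv.Perm (Fin n) × Equiv.Perm (Fin n) => if k ∘ ⇑p.1 = k ∘ ⇑p.2 then C else 0)]
      rw [← Finset.sum_filter, Finset.sum_const, CO.count_pairs k, nsmul_eq_mul]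
      push_cast
      ring
    · rw [if_neg hkk, mul_zero]
      refine Finset.sum_eq_zero fun σ _ => Finset.sum_eq_zero fun τ _ => ?_
      rw [if_neg]
      intro hcon
      apply hkk
      refine CO.antitone_perm_eq hk hk' (σ * τ⁻¹) ?_
      funext i
      have := congrFun hcon (τ⁻¹ i)
      simpa [Equiv.Perm.mul_apply] using this
  rw [hcube, hsum] at hred
  have hI : ∫ x in Fdom n, f x
      = C * (Hstab k : ℝ) * (if k = k' then (1:ℝ) else 0) := by
    rcases eq_or_ne k k' with h | h
    · simp only [h, if_pos rfl, mul_one] at hred ⊢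
      refine mul_left_cancel₀ hfact ?_
      rw [← hred]; ring
    · simp only [if_neg h, mul_zero] at hred ⊢
      exact ((mul_eq_zero.mp hred.symm).resolve_left hfact)
  simpa [hfdef, hC] using hI
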